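/- Let u ∈ ℝ²_∞, let p ∈ S₁^ε(u) and q ∈ S₂^δ(u) for signs ε, δ ∈ {+,−}, and let γ be a geodesic between the points p and q in ℝ²_∞. Then there exists a parameter t in the domain of γ such that γ(t) ∈ I^{εδ}(u), where I^{εδ}(u) = {(u₁ + ε t, u₂ + δ t) : t ≥ 0} is the εδ-diagonal ray at u. -/
import Mathlib


/-- A geodesic from `p` to `q` in a metric space: an isometric embedding of the
real interval `[0, dist p q]` sending `0` to `p` and `dist p q` to `q`. -/
def IsGeodesic {X : Type*} [MetricSpace X] (p q : X) (γ : ℝ → X) : Prop :=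
  γ 0 = p ∧ γ (dist p q) = q ∧
    ∀ s ∈ Set.Icc (0 : ℝ) (dist p q), ∀ t ∈ Set.Icc (0 : ℝ) (dist p q),
      dist (γ s) (γ t) = |s - t|

/-- The sector `S₁^ε(p)` in the `l∞` plane: points `q` with `d∞(p,q) = ε(q₁ − p₁)`. -/
def sector1 (ε : ℝ) (p : ℝ × ℝ) : Set (ℝ × ℝ) :=
  {q | dist p q = ε * (q.1 - p.1)}

/-- The sector `S₂^ε(p)` in the `l∞` plane: points `q` with `d∞(p,q) = ε(q₂ − p₂)`. -/
def sector2 (ε : ℝ) (p : ℝ × ℝ) : Set (ℝ × ℝ) :=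
  {q | dist p q = ε * (q.2 - p.2)}

/-- The `ε₁ε₂`-diagonal ray at `p`: `{(p₁ + ε₁ t, p₂ + ε₂ t) : t ≥ 0}`. -/
def ray (ε₁ ε₂ : ℝ) (p : ℝ × ℝ) : Set (ℝ × ℝ) :=
  {q | ∃ t : ℝ, 0 ≤ t ∧ q = (p.1 + ε₁ * t, p.2 + ε₂ * t)}

theorem geodesic_meets_ray (u p q : ℝ × ℝ) (ε δ : ℝ)
    (hε : ε = 1 ∨ ε = -1) (hδ : δ = 1 ∨ δ = -1)
    (hp : p ∈ sector1 ε u) (hq : q ∈ sector2 δ u)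
    (γ : ℝ → ℝ × ℝ) (hγ : IsGeodesic p q γ) :
    ∃ t ∈ Set.Icc (0 : ℝ) (dist p q), γ t ∈ ray ε δ u := by
  obtain ⟨hγ0, hγT, hiso⟩ := hγ
  set T := dist p q with hTdef
  have hT0 : (0:ℝ) ≤ T := dist_nonneg
  have hεabs : |ε| = 1 := by rcases hε with h|h <;> simp [h]
  have hδabs : |δ| = 1 := by rcases hδ with h|h <;> simp [h]
  have hεsq : ε * ε = 1 := by rcases hε with h|h <;> norm_num [h]
  have hδsq : δ * δ = 1 := by rcases hδ with h|h <;> norm_num [h]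
  set g : ℝ → ℝ := fun t => ε * ((γ t).1 - u.1) with hgdef
  set k : ℝ → ℝ := fun t => δ * ((γ t).2 - u.2) with hkdef
  have hlipg : ∀ s ∈ Set.Icc (0:ℝ) T, ∀ t ∈ Set.Icc (0:ℝ) T,
      |g s - g t| ≤ |s - t| := by
    intro s hs t ht
    have h1 : g s - g t = ε * ((γ s).1 - (γ t).1) := by simp [hgdef]; ring
    have h2 : |(γ s).1 - (γ t).1| ≤ dist (γ s) (γ t) := by
      rw [Prod.dist_eq, Real.dist_eq]
      exact le_max_left _ _
    rw [h1, abs_mul, hεabs, one_mul]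
    calc |(γ s).1 - (γ t).1| ≤ dist (γ s) (γ t) := h2
      _ = |s - t| := hiso s hs t ht
  have hlipk : ∀ s ∈ Set.Icc (0:ℝ) T, ∀ t ∈ Set.Icc (0:ℝ) T,
      |k s - k t| ≤ |s - t| := by
    intro s hs t ht
    have h1 : k s - k t = δ * ((γ s).2 - (γ t).2) := by simp [hkdef]; ring
    have h2 : |(γ s).2 - (γ t).2| ≤ dist (γ s) (γ t) := by
      rw [Prod.dist_eq, Real.dist_eq]
      exact le_max_right _ _
    rw [h1, abs_mul, hδabs, one_mul]
    calc |(γ s).2 - (γ t).2| ≤ dist (γ s) (γ t) := h2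
      _ = |s - t| := hiso s hs t ht
  have hg0 : g 0 = dist u p := by
    simp only [hgdef, hγ0]
    exact (hp).symm
  have hkT : k T = dist u q := by
    simp only [hkdef, hγT]
    exact (hq).symm
  -- endpoint comparisons
  have hk0 : k 0 ≤ g 0 := by
    have h1 : k 0 = δ * (p.2 - u.2) := by simp [hkdef, hγ0]
    have h2 : δ * (p.2 - u.2) ≤ |p.2 - u.2| := by
      calc δ * (p.2 - u.2) ≤ |δ * (p.2 - u.2)| := le_abs_self _
        _ = |p.2 - u.2| := by rw [abs_mul, hδabs, one_mul]
    have h3 : |p.2 - u.2| ≤ dist u p := by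
      rw [Prod.dist_eq, Real.dist_eq, Real.dist_eq, abs_sub_comm]
      exact le_max_right _ _
    rw [h1, hg0]; linarith
  have hgT : g T ≤ k T := by
    have h1 : g T = ε * (q.1 - u.1) := by simp [hgdef, hγT]
    have h2 : ε * (q.1 - u.1) ≤ |q.1 - u.1| := by
      calc ε * (q.1 - u.1) ≤ |ε * (q.1 - u.1)| := le_abs_self _
        _ = |q.1 - u.1| := by rw [abs_mul, hεabs, one_mul]
    have h3 : |q.1 - u.1| ≤ dist u q := by
      rw [Prod.dist_eq, Real.dist_eq, Real.dist_eq, abs_sub_comm]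
      exact le_max_left _ _
    rw [h1, hkT]; linarith
  -- continuity of F = g - k on [0, T]
  set F : ℝ → ℝ := fun t => g t - k t with hFdef
  have hFcont : ContinuousOn F (Set.Icc 0 T) := by
    apply LipschitzOnWith.continuousOn (K := 2)
    apply LipschitzOnWith.of_dist_le_mul
    intro s hs t ht
    rw [Real.dist_eq, Real.dist_eq]
    have h1 := hlipg s hs t ht
    have h2 := hlipk s hs t ht
    have : |F s - F t| ≤ |g s - g t| + |k s - k t| := by
      simp only [hFdef]
      calc |g s - k s - (g t - k t)| = |(g s - g t) + -(k s - k t)| := by ring_nf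
        _ ≤ |g s - g t| + |-(k s - k t)| := abs_add_le _ _
        _ = |g s - g t| + |k s - k t| := by rw [abs_neg]
    push_cast
    linarith
  -- IVT
  have h0mem : (0:ℝ) ∈ Set.Icc (F T) (F 0) := by
    constructor
    · simp only [hFdef]; linarith
    · simp only [hFdef]; linarith
  obtain ⟨t₀, ht₀mem, ht₀⟩ := intermediate_value_Icc' hT0 hFcont h0mem
  have hFt₀ : g t₀ = k t₀ := by
    have : g t₀ - k t₀ = 0 := ht₀
    linarith
  -- nonnegativity of g t₀
  have h0mem' : (0:ℝ) ∈ Set.Icc (0:ℝ) T := ⟨le_refl _, hT0⟩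
  have hTmem : T ∈ Set.Icc (0:ℝ) T := ⟨hT0, le_refl _⟩
  have hA : g 0 - g t₀ ≤ t₀ := by
    have := hlipg 0 h0mem' t₀ ht₀mem
    have h2 : |(0:ℝ) - t₀| = t₀ := by rw [abs_sub_comm]; simp [abs_of_nonneg ht₀mem.1]
    rw [h2] at this
    calc g 0 - g t₀ ≤ |g 0 - g t₀| := le_abs_self _
      _ ≤ t₀ := this
  have hB : k T - k t₀ ≤ T - t₀ := by
    have := hlipk T hTmem t₀ ht₀mem
    have h2 : |T - t₀| = T - t₀ := abs_of_nonneg (by linarith [ht₀mem.2])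
    rw [h2] at this
    calc k T - k t₀ ≤ |k T - k t₀| := le_abs_self _
      _ ≤ T - t₀ := this
  have htri : T ≤ dist u p + dist u q := by
    rw [hTdef]
    calc dist p q ≤ dist p u + dist u q := dist_triangle _ _ _
      _ = dist u p + dist u q := by rw [dist_comm p u]
  have hnn : 0 ≤ g t₀ := by
    rw [hg0] at hA; rw [hkT] at hB
    nlinarith [hFt₀]
  refine ⟨t₀, ht₀mem, g t₀, hnn, ?_⟩
  have e1 : (γ t₀).1 = u.1 + ε * g t₀ := by
    simp only [hgdef]
    linear_combination (u.1 - (γ t₀).1) * hεsq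
  have e2 : (γ t₀).2 = u.2 + δ * g t₀ := by
    rw [hFt₀]
    simp only [hkdef]
    linear_combination (u.2 - (γ t₀).2) * hδsq
  exact Prod.ext e1 e2
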